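/- Let n ≥ p ≥ 1, X ∈ ℝ^{n×p} with XᵀX = I_p, and let Q ∈ ℝ^{n×n} be orthogonal (QᵀQ = I_n) with first p columns equal to X. Define the family Λ consisting of U_{ij} = Q(E_{ij} − E_{ji}) for 1 ≤ i < j ≤ p and U_{ij} = Q E_{ij} for p < i ≤ n, 1 ≤ j ≤ p, where E_{ij} ∈ ℝ^{n×p} is the matrix with (i,j) entry 1 and zeros elsewhere. Then every member of Λ lies in the tangent space T_X = {Z : ZᵀX + XᵀZ = 0}, and Λ is orthonormal with respect to the canonical metric: g(U_{ij}, U_{kl}) = 1 if (i,j) = (k,l) and g(U_{ij}, U_{kl}) = 0 for distinct index pairs in Λ. -/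

import Mathlib

open Matrix

/-- Basis element `Q(E_{ij} - E_{ji})` for `i < j ≤ p`. -/
def stiefelBasis₁ {n p : ℕ} (hpn : p ≤ n) (Q : Matrix (Fin n) (Fin n) ℝ)
    (i j : Fin p) : Matrix (Fin n) (Fin p) ℝ :=
  Q * (Matrix.single (Fin.castLE hpn i) j (1 : ℝ)
    - Matrix.single (Fin.castLE hpn j) i (1 : ℝ))

/-- Basis element `Q E_{ij}` for `i > p`. -/
def stiefelBasis₂ {n p : ℕ} (Q : Matrix (Fin n) (Fin n) ℝ)
    (i : Fin n) (j : Fin p) : Matrix (Fin n) (Fin p) ℝ :=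
  Q * Matrix.single i j (1 : ℝ)

/-- Canonical metric `g(Z₁,Z₂) = tr(Z₁ᵀ (I - ½ X Xᵀ) Z₂)` at `X`. -/
noncomputable def canonicalMetric {n p : ℕ} (X Z₁ Z₂ : Matrix (Fin n) (Fin p) ℝ) : ℝ :=
  Matrix.trace (Z₁ᵀ * ((1 : Matrix (Fin n) (Fin n) ℝ) - (1/2 : ℝ) • (X * Xᵀ)) * Z₂)

namespace StiefelAux
variable {n p : ℕ}

def J (hpn : p ≤ n) : Matrix (Fin n) (Fin p) ℝ :=
  Matrix.of fun i j => if i = Fin.castLE hpn j then 1 else 0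

lemma mul_J (hpn : p ≤ n) (Q : Matrix (Fin n) (Fin n) ℝ) :
    Q * J hpn = Matrix.of fun i j => Q i (Fin.castLE hpn j) := by
  ext i j; simp [J, mul_apply]

lemma Jt_mul (hpn : p ≤ n) {r : Type*} (M : Matrix (Fin n) r ℝ) :
    (J hpn)ᵀ * M = M.submatrix (Fin.castLE hpn) id := by
  ext a b; simp [J, mul_apply]

lemma std_transpose {m r : Type*} [DecidableEq m] [DecidableEq r] (i : m) (j : r) :
    (Matrix.single i j (1:ℝ))ᵀ = Matrix.single j i (1:ℝ) := by
  ext a b; simp [Matrix.single, and_comm]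

lemma trace_std_mul {m r : Type*} [Fintype m] [Fintype r] [DecidableEq m] [DecidableEq r]
    (i k : m) (j l : r) :
    Matrix.trace ((Matrix.single i j (1:ℝ))ᵀ * Matrix.single k l (1:ℝ))
      = if i = k ∧ j = l then 1 else 0 := by
  simp only [Matrix.trace, Matrix.diag, mul_apply, Matrix.transpose_apply,
    Matrix.single, Matrix.of_apply, boole_mul, ← ite_and]
  rw [Finset.sum_comm]
  simp [ite_and, Finset.sum_ite_eq, eq_comm]

lemma Jt_std₁ (hpn : p ≤ n) (i : Fin p) (j : Fin p) :
    (J hpn)ᵀ * Matrix.single (Fin.castLE hpn i) j (1:ℝ)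
      = Matrix.single i j (1:ℝ) := by
  rw [Jt_mul]
  ext a b
  simp [Matrix.single, Fin.castLE_inj, eq_comm]

lemma Jt_std₂ (hpn : p ≤ n) (k : Fin n) (l : Fin p) (hk : p ≤ (k:ℕ)) :
    (J hpn)ᵀ * Matrix.single k l (1:ℝ) = 0 := by
  rw [Jt_mul]
  ext a b
  have h : k ≠ Fin.castLE hpn a := by
    intro h
    have ha := a.isLt
    have : (k : ℕ) = (a : ℕ) := by rw [h]; rfl
    omega
  simp [Matrix.single, h]

lemma X_eq (hpn : p ≤ n) (Q : Matrix (Fin n) (Fin n) ℝ) (X : Matrix (Fin n) (Fin p) ℝ)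
    (hQX : ∀ (i : Fin n) (j : Fin p), Q i (Fin.castLE hpn j) = X i j) :
    X = Q * J hpn := by
  rw [mul_J]; ext i j; simp [hQX]

lemma metric_eq (hpn : p ≤ n) (Q : Matrix (Fin n) (Fin n) ℝ) (hQ : Qᵀ * Q = 1)
    (X : Matrix (Fin n) (Fin p) ℝ)
    (hQX : ∀ (i : Fin n) (j : Fin p), Q i (Fin.castLE hpn j) = X i j)
    (A B : Matrix (Fin n) (Fin p) ℝ) :
    Matrix.trace ((Q * A)ᵀ * ((1 : Matrix (Fin n) (Fin n) ℝ) - (1/2 : ℝ) • (X * Xᵀ)) * (Q * B))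
      = Matrix.trace (Aᵀ * B)
        - (1/2 : ℝ) * Matrix.trace (((J hpn)ᵀ * A)ᵀ * ((J hpn)ᵀ * B)) := by
  have hX : X = Q * J hpn := X_eq hpn Q X hQX
  have key : (Q * A)ᵀ * ((1 : Matrix (Fin n) (Fin n) ℝ) - (1/2 : ℝ) • (X * Xᵀ)) * (Q * B)
      = Aᵀ * B - (1/2 : ℝ) • (((J hpn)ᵀ * A)ᵀ * ((J hpn)ᵀ * B)) := by
    subst hX
    have h1 : ∀ (M : Matrix (Fin n) (Fin p) ℝ), Qᵀ * (Q * M) = M := by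
      intro M; rw [← Matrix.mul_assoc, hQ, Matrix.one_mul]
    calc (Q * A)ᵀ * (1 - (1/2 : ℝ) • (Q * J hpn * (Q * J hpn)ᵀ)) * (Q * B)
        = Aᵀ * (Qᵀ * (Q * B)) - (1/2 : ℝ) • (Aᵀ * (Qᵀ * (Q * ((J hpn) * ((J hpn)ᵀ * (Qᵀ * (Q * B))))))) := by
          simp only [Matrix.transpose_mul, Matrix.sub_mul, Matrix.mul_sub, Matrix.mul_one,
            Matrix.smul_mul, Matrix.mul_smul, Matrix.mul_assoc]
      _ = Aᵀ * B - (1/2 : ℝ) • (Aᵀ * ((J hpn) * ((J hpn)ᵀ * B))) := by simp only [h1]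
      _ = Aᵀ * B - (1/2 : ℝ) • (((J hpn)ᵀ * A)ᵀ * ((J hpn)ᵀ * B)) := by
          simp only [Matrix.transpose_mul, Matrix.transpose_transpose, Matrix.mul_assoc]
  rw [key, Matrix.trace_sub, Matrix.trace_smul, smul_eq_mul]

end StiefelAux
namespace StiefelAux

lemma tangent_eq (hpn : p ≤ n) (Q : Matrix (Fin n) (Fin n) ℝ) (hQ : Qᵀ * Q = 1)
    (X : Matrix (Fin n) (Fin p) ℝ)
    (hQX : ∀ (i : Fin n) (j : Fin p), Q i (Fin.castLE hpn j) = X i j)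
    (A : Matrix (Fin n) (Fin p) ℝ) :
    (Q * A)ᵀ * X + Xᵀ * (Q * A) = ((J hpn)ᵀ * A)ᵀ + (J hpn)ᵀ * A := by
  have hX : X = Q * J hpn := X_eq hpn Q X hQX
  subst hX
  have h1 : ∀ (M : Matrix (Fin n) (Fin p) ℝ), Qᵀ * (Q * M) = M := by
    intro M; rw [← Matrix.mul_assoc, hQ, Matrix.one_mul]
  calc (Q * A)ᵀ * (Q * J hpn) + (Q * J hpn)ᵀ * (Q * A)
      = Aᵀ * (Qᵀ * (Q * J hpn)) + (J hpn)ᵀ * (Qᵀ * (Q * A)) := by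
        simp only [Matrix.transpose_mul, Matrix.mul_assoc]
    _ = ((J hpn)ᵀ * A)ᵀ + (J hpn)ᵀ * A := by
        simp only [h1, Matrix.transpose_mul, Matrix.transpose_transpose]

lemma not_cast_eq (hpn : p ≤ n) (i : Fin p) (k : Fin n) (hk : p ≤ (k:ℕ)) :
    Fin.castLE hpn i ≠ k := by
  intro h
  have hi := i.isLt
  have : (i : ℕ) = (k : ℕ) := by rw [← h]; rfl
  omega

end StiefelAux

open StiefelAux

/-- The family `Λ` consisting of `Q(E_{ij} - E_{ji})` for `i < j ≤ p` and
`Q E_{ij}` for `i > p` lies in the tangent space at `X` and is orthonormal with respect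
to the canonical metric. -/
theorem stiefel_basis_orthonormal (n p : ℕ) (hp : 1 ≤ p) (hpn : p ≤ n)
    (X : Matrix (Fin n) (Fin p) ℝ) (hX : Xᵀ * X = 1)
    (Q : Matrix (Fin n) (Fin n) ℝ) (hQ : Qᵀ * Q = 1)
    (hQX : ∀ (i : Fin n) (j : Fin p), Q i (Fin.castLE hpn j) = X i j) :
    (∀ i j : Fin p, i < j →
      (stiefelBasis₁ hpn Q i j)ᵀ * X + Xᵀ * (stiefelBasis₁ hpn Q i j) = 0) ∧
    (∀ (i : Fin n) (j : Fin p), p ≤ (i : ℕ) →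
      (stiefelBasis₂ Q i j)ᵀ * X + Xᵀ * (stiefelBasis₂ Q i j) = 0) ∧
    (∀ i j k l : Fin p, i < j → k < l →
      canonicalMetric X (stiefelBasis₁ hpn Q i j) (stiefelBasis₁ hpn Q k l)
        = if i = k ∧ j = l then 1 else 0) ∧
    (∀ (i k : Fin n) (j l : Fin p), p ≤ (i : ℕ) → p ≤ (k : ℕ) →
      canonicalMetric X (stiefelBasis₂ Q i j) (stiefelBasis₂ Q k l)
        = if i = k ∧ j = l then 1 else 0) ∧
    (∀ (i j : Fin p) (k : Fin n) (l : Fin p), i < j → p ≤ (k : ℕ) →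
      canonicalMetric X (stiefelBasis₁ hpn Q i j) (stiefelBasis₂ Q k l) = 0) := by
  refine ⟨?_, ?_, ?_, ?_, ?_⟩
  · intro i j hij
    rw [stiefelBasis₁, tangent_eq hpn Q hQ X hQX]
    rw [Matrix.mul_sub, Jt_std₁, Jt_std₁]
    simp only [Matrix.transpose_sub, std_transpose]
    abel
  · intro i j hi
    rw [stiefelBasis₂, tangent_eq hpn Q hQ X hQX, Jt_std₂ hpn i j hi]
    simp
  · intro i j k l hij hkl
    rw [stiefelBasis₁, stiefelBasis₁, canonicalMetric, metric_eq hpn Q hQ X hQX]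
    simp only [Matrix.mul_sub, Jt_std₁]
    simp only [Matrix.transpose_sub, Matrix.sub_mul, Matrix.mul_sub, Matrix.trace_sub,
      trace_std_mul, Fin.castLE_inj]
    have hb : ¬ (i = l ∧ j = k) := by
      rintro ⟨rfl, rfl⟩
      exact absurd (hij.trans hkl) (lt_irrefl _)
    have hb' : ¬ (j = k ∧ i = l) := fun h => hb ⟨h.2, h.1⟩
    by_cases h : i = k ∧ j = l
    · obtain ⟨rfl, rfl⟩ := h
      simp [hb, hb']
      ring
    · have h' : ¬ (j = l ∧ i = k) := fun hh => h ⟨hh.2, hh.1⟩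
      simp [h, h', hb, hb']
  · intro i k j l hi hk
    rw [stiefelBasis₂, stiefelBasis₂, canonicalMetric, metric_eq hpn Q hQ X hQX]
    rw [Jt_std₂ hpn i j hi, Jt_std₂ hpn k l hk, trace_std_mul]
    simp
  · intro i j k l hij hk
    rw [stiefelBasis₁, stiefelBasis₂, canonicalMetric, metric_eq hpn Q hQ X hQX]
    rw [Matrix.mul_sub, Jt_std₁, Jt_std₁, Jt_std₂ hpn k l hk]
    simp only [Matrix.transpose_sub, Matrix.sub_mul, Matrix.trace_sub, trace_std_mul,
      not_cast_eq hpn i k hk, not_cast_eq hpn j k hk, false_and, if_false]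
    simp
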